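/- Let μ be a finite signed measure on a compact interval [a,b] ⊂ ℝ with density ρ (with respect to Lebesgue measure) such that: (i) μ([a,b]) = 0, (ii) ∫_{[a,b]} t dμ(t) = 0, and (iii) there exist points p ≤ q in [a,b] with ρ ≥ 0 on [a,p] ∪ [q,b] and ρ ≤ 0 on (p,q). Then for every convex function g : [a,b] → ℝ, ∫_{[a,b]} g dμ ≥ 0. -/

import Mathlib

open MeasureTheory

theorem stmt_1 (a b p q : ℝ) (ρ g : ℝ → ℝ)
    (hab : a ≤ b) (hp : p ∈ Set.Icc a b) (hq : q ∈ Set.Icc a b) (hpq : p ≤ q)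
    (hρint : IntegrableOn ρ (Set.Icc a b))
    (hρ1 : ∀ t ∈ Set.Icc a p, 0 ≤ ρ t)
    (hρ2 : ∀ t ∈ Set.Icc q b, 0 ≤ ρ t)
    (hρ3 : ∀ t ∈ Set.Ioo p q, ρ t ≤ 0)
    (hmass : (∫ t in Set.Icc a b, ρ t) = 0)
    (hmom : (∫ t in Set.Icc a b, t * ρ t) = 0)
    (hg : ConvexOn ℝ (Set.Icc a b) g)
    (hgint : IntegrableOn (fun t => g t * ρ t) (Set.Icc a b)) :
    0 ≤ ∫ t in Set.Icc a b, g t * ρ t := by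
  rcases eq_or_lt_of_le hpq with rfl | hpq'
  · -- p = q : ρ ≥ 0 everywhere, zero mass forces ρ = 0 a.e.
    have hnn : ∀ t ∈ Set.Icc a b, 0 ≤ ρ t := by
      intro t ht
      rcases le_total t p with h | h
      · exact hρ1 t ⟨ht.1, h⟩
      · exact hρ2 t ⟨h, ht.2⟩
    have hae0 : ρ =ᵐ[volume.restrict (Set.Icc a b)] 0 := by
      refine (integral_eq_zero_iff_of_nonneg_ae ?_ hρint).mp hmass
      exact (ae_restrict_iff' measurableSet_Icc).mpr
        (Filter.Eventually.of_forall fun t ht => hnn t ht)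
    have h0 : (fun t => g t * ρ t) =ᵐ[volume.restrict (Set.Icc a b)] 0 :=
      hae0.mono fun t ht => by simp only [Pi.zero_apply] at ht ⊢; simp [ht]
    rw [integral_congr_ae h0]
    simp
  · -- p < q : subtract the secant line through (p, g p) and (q, g q)
    set s : ℝ := (g q - g p) / (q - p) with hs
    set ℓ : ℝ → ℝ := fun t => g p + s * (t - p) with hℓ
    have hqp : (0:ℝ) < q - p := by linarith
    -- g ≤ ℓ on [p,q]
    have hle : ∀ t ∈ Set.Icc p q, g t ≤ ℓ t := by
      intro t ht
      have h1 : (0:ℝ) ≤ (q - t) / (q - p) := div_nonneg (by linarith [ht.2]) hqp.le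
      have h2 : (0:ℝ) ≤ (t - p) / (q - p) := div_nonneg (by linarith [ht.1]) hqp.le
      have h3 : (q - t) / (q - p) + (t - p) / (q - p) = 1 := by
        rw [← add_div, div_eq_one_iff_eq hqp.ne']; ring
      have hcx := hg.2 hp hq h1 h2 h3
      have harg : ((q - t) / (q - p)) • p + ((t - p) / (q - p)) • q = t := by
        rw [smul_eq_mul, smul_eq_mul, div_mul_eq_mul_div, div_mul_eq_mul_div,
          ← add_div, div_eq_iff hqp.ne']
        ring
      rw [harg, smul_eq_mul, smul_eq_mul] at hcx
      have hnum : (q - t) / (q - p) * g p + (t - p) / (q - p) * g q = ℓ t := by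
        rw [div_mul_eq_mul_div, div_mul_eq_mul_div, ← add_div, hℓ, hs,
          div_eq_iff hqp.ne']
        field_simp
        ring
      exact le_of_le_of_eq hcx hnum
    -- ℓ ≤ g on [a,p]
    have hge1 : ∀ t ∈ Set.Icc a p, ℓ t ≤ g t := by
      intro t ht
      rcases eq_or_lt_of_le ht.2 with rfl | htp
      · simp [hℓ]
      have hqt : (0:ℝ) < q - t := by linarith
      have h1 : (0:ℝ) ≤ (q - p) / (q - t) := div_nonneg hqp.le hqt.le
      have h2 : (0:ℝ) ≤ (p - t) / (q - t) := div_nonneg (by linarith) hqt.le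
      have h3 : (q - p) / (q - t) + (p - t) / (q - t) = 1 := by
        rw [← add_div, div_eq_one_iff_eq hqt.ne']; ring
      have ht' : t ∈ Set.Icc a b := ⟨ht.1, le_trans ht.2 (le_trans hpq hq.2)⟩
      have hcx := hg.2 ht' hq h1 h2 h3
      have harg : ((q - p) / (q - t)) • t + ((p - t) / (q - t)) • q = p := by
        rw [smul_eq_mul, smul_eq_mul, div_mul_eq_mul_div, div_mul_eq_mul_div,
          ← add_div, div_eq_iff hqt.ne']
        ring
      rw [harg, smul_eq_mul, smul_eq_mul] at hcx
      have h4 : g p * (q - t) ≤ (q - p) * g t + (p - t) * g q := by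
        rw [div_mul_eq_mul_div, div_mul_eq_mul_div, ← add_div,
          le_div_iff₀ hqt] at hcx
        linarith
      rw [hℓ, hs, ← sub_nonneg]
      have key : g t - (g p + (g q - g p) / (q - p) * (t - p))
          = ((q - p) * g t - ((q - t) * g p + (t - p) * g q)) / (q - p) := by
        field_simp
        ring
      rw [key]
      exact div_nonneg (by nlinarith) hqp.le
    -- ℓ ≤ g on [q,b]
    have hge2 : ∀ t ∈ Set.Icc q b, ℓ t ≤ g t := by
      intro t ht
      rcases eq_or_lt_of_le ht.1 with rfl | hqt'
      · simp only [hℓ, hs]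
        rw [div_mul_cancel₀ _ hqp.ne']; linarith
      have htp : (0:ℝ) < t - p := by linarith
      have h1 : (0:ℝ) ≤ (t - q) / (t - p) := div_nonneg (by linarith) htp.le
      have h2 : (0:ℝ) ≤ (q - p) / (t - p) := div_nonneg hqp.le htp.le
      have h3 : (t - q) / (t - p) + (q - p) / (t - p) = 1 := by
        rw [← add_div, div_eq_one_iff_eq htp.ne']; ring
      have ht' : t ∈ Set.Icc a b := ⟨le_trans (le_trans hp.1 hpq) ht.1, ht.2⟩
      have hcx := hg.2 hp ht' h1 h2 h3
      have harg : ((t - q) / (t - p)) • p + ((q - p) / (t - p)) • t = q := by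
        rw [smul_eq_mul, smul_eq_mul, div_mul_eq_mul_div, div_mul_eq_mul_div,
          ← add_div, div_eq_iff htp.ne']
        ring
      rw [harg, smul_eq_mul, smul_eq_mul] at hcx
      have h4 : g q * (t - p) ≤ (t - q) * g p + (q - p) * g t := by
        rw [div_mul_eq_mul_div, div_mul_eq_mul_div, ← add_div,
          le_div_iff₀ htp] at hcx
        linarith
      rw [hℓ, hs, ← sub_nonneg]
      have key : g t - (g p + (g q - g p) / (q - p) * (t - p))
          = ((q - p) * g t - ((q - t) * g p + (t - p) * g q)) / (q - p) := by
        field_simp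
        ring
      rw [key]
      exact div_nonneg (by nlinarith) hqp.le
    -- pointwise nonnegativity of (g - ℓ) * ρ on [a,b]
    have hprod : ∀ t ∈ Set.Icc a b, 0 ≤ (g t - ℓ t) * ρ t := by
      intro t ht
      by_cases htp : t ≤ p
      · exact mul_nonneg (sub_nonneg.mpr (hge1 t ⟨ht.1, htp⟩)) (hρ1 t ⟨ht.1, htp⟩)
      by_cases htq : q ≤ t
      · exact mul_nonneg (sub_nonneg.mpr (hge2 t ⟨htq, ht.2⟩)) (hρ2 t ⟨htq, ht.2⟩)
      · push_neg at htp htq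
        have e1 : g t - ℓ t ≤ 0 := sub_nonpos.mpr (hle t ⟨htp.le, htq.le⟩)
        have e2 : ρ t ≤ 0 := hρ3 t ⟨htp, htq⟩
        nlinarith
    -- integrability pieces
    have htρ : IntegrableOn (fun t => t * ρ t) (Set.Icc a b) := by
      refine Integrable.bdd_mul (c := max |a| |b|) hρint
        measurable_id.aestronglyMeasurable ?_
      refine (ae_restrict_iff' measurableSet_Icc).mpr
        (Filter.Eventually.of_forall fun t ht => ?_)
      simpa [Real.norm_eq_abs] using abs_le_max_abs_abs ht.1 ht.2
    have hℓρ : IntegrableOn (fun t => ℓ t * ρ t) (Set.Icc a b) := by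
      have heq : (fun t => ℓ t * ρ t)
          = fun t => (g p - s * p) * ρ t + s * (t * ρ t) := by
        funext t; simp only [hℓ]; ring
      rw [heq]
      exact (hρint.const_mul _).add (htρ.const_mul _)
    have hnonneg : 0 ≤ ∫ t in Set.Icc a b, (g t - ℓ t) * ρ t :=
      setIntegral_nonneg measurableSet_Icc hprod
    have hℓ0 : (∫ t in Set.Icc a b, ℓ t * ρ t) = 0 := by
      have heq : (fun t => ℓ t * ρ t)
          = fun t => (g p - s * p) * ρ t + s * (t * ρ t) := by
        funext t; simp only [hℓ]; ring
      rw [heq, integral_add (hρint.const_mul _) (htρ.const_mul _),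
        integral_const_mul, integral_const_mul, hmass, hmom]
      ring
    have hsplit : (∫ t in Set.Icc a b, (g t - ℓ t) * ρ t)
        = (∫ t in Set.Icc a b, g t * ρ t) - ∫ t in Set.Icc a b, ℓ t * ρ t := by
      have heq : (fun t => (g t - ℓ t) * ρ t)
          = fun t => g t * ρ t - ℓ t * ρ t := by funext t; ring
      rw [heq, integral_sub hgint hℓρ]
    rw [hsplit, hℓ0, sub_zero] at hnonneg
    exact hnonneg
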